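/- arXiv:1502.02899 — 2 statements merged into one kernel-verified Lean document; each statement's English description precedes it below -/
import Mathlib

section
/- The arc-flow formulation over the DP graph is equivalent to the Gilmore-Gomory formulation over binary patterns: the optimal integer value of the arc-flow model (minimize flow z from s to t subject to ∑_{(u,v,i)∈A} f_{uvi} ≥ b_i for each item i, f integer ≥ 0) equals the optimal value of the 0-1 CSP pattern model. -/
/-- Vertices of the 0-1 knapsack DP graph: `some (i, p)` with level `i ∈ {0,...,m}` and
position `p ∈ {0,...,W}`; the target `t` is `none`, the source is `some (0, 0)`. -/
abbrev DV (m W : ℕ) := Option (Fin (m + 1) × Fin (W + 1))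

/-- Labeled arcs of the DP graph. Labels are `Option (Fin m)`: `none` is a loss/skip arc,
`some j` means item `j` is used. From `(i, p)` there is a skip arc to `(i+1, p)` and an arc
using item `j` (with `j + 1 = i + 1`) to `(i+1, p + w j)` when it fits; from each `(m, p)`
there is a loss arc to the target. -/
def dArc (m W : ℕ) (w : Fin m → ℕ) : DV m W → DV m W → Option (Fin m) → Prop
  | some (i, p), some (i', p'), l =>
      (i' : ℕ) = (i : ℕ) + 1 ∧
        ((l = none ∧ (p' : ℕ) = (p : ℕ)) ∨
          (∃ j : Fin m, l = some j ∧ (j : ℕ) + 1 = (i' : ℕ) ∧ (p' : ℕ) = (p : ℕ) + w j))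
  | some (i, _), none, l => (i : ℕ) = m ∧ l = none
  | none, _, _ => False

/-- Feasible values of the integer arc-flow model: minimize the flow `z` from source to
target subject to flow conservation at internal nodes and the demand constraints
`∑_{arcs labeled j} f ≥ b j`, with `f` non-negative integer and supported on arcs. -/
def flowVals (m W : ℕ) (w b : Fin m → ℕ) : Set ℕ :=
  {z | ∃ f : DV m W → DV m W → Option (Fin m) → ℕ,
    (∀ u v l, ¬ dArc m W w u v l → f u v l = 0) ∧
    (∀ v : DV m W, v ≠ some (0, 0) → v ≠ none →
      (∑ u : DV m W, ∑ l : Option (Fin m), f u v l) =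
      (∑ u : DV m W, ∑ l : Option (Fin m), f v u l)) ∧
    (∀ j : Fin m, b j ≤ ∑ u : DV m W, ∑ v : DV m W, f u v (some j)) ∧
    z = ∑ v : DV m W, ∑ l : Option (Fin m), f (some (0, 0)) v l}

/-- Feasible values of the Gilmore-Gomory 0-1 CSP pattern model: a solution is a list of
rolls, each cut according to a binary pattern, meeting all demands. -/
def patVals (m W : ℕ) (w b : Fin m → ℕ) : Set ℕ :=
  {z | ∃ L : List (Fin m → Bool), L.length = z ∧
    (∀ a ∈ L, ∑ i, (if a i then w i else 0) ≤ W) ∧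
    (∀ i, b i ≤ (L.map (fun a => if a i then 1 else 0)).sum)}

section Aux
variable {m W : ℕ} (w : Fin m → ℕ)

/-- weight of slot `j` (0 if out of range or unused). -/
def ww (w : Fin m → ℕ) (a : Fin m → Bool) (j : ℕ) : ℕ :=
  if h : j < m then (if a ⟨j, h⟩ then w ⟨j, h⟩ else 0) else 0

/-- partial sum of widths over used items below `k`. -/
def psum (w : Fin m → ℕ) (a : Fin m → Bool) (k : ℕ) : ℕ :=
  ∑ j ∈ Finset.range k, ww w a j

lemma psum_zero (a : Fin m → Bool) : psum w a 0 = 0 := by simp [psum]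

lemma psum_succ (a : Fin m → Bool) (k : ℕ) :
    psum w a (k + 1) = psum w a k + ww w a k := Finset.sum_range_succ _ _

lemma psum_mono (a : Fin m → Bool) {k k' : ℕ} (h : k ≤ k') :
    psum w a k ≤ psum w a k' :=
  Finset.sum_le_sum_of_subset (Finset.range_subset_range.2 h)

lemma psum_of_le (a : Fin m → Bool) {k : ℕ} (h : m ≤ k) :
    psum w a k = psum w a m := by
  induction k with
  | zero => obtain rfl : m = 0 := Nat.le_zero.mp h; rfl
  | succ n ih =>
    rcases Nat.eq_or_lt_of_le h with h' | h'
    · rw [← h']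
    · rw [psum_succ, ww, dif_neg (by omega), ih (by omega), Nat.add_zero]

lemma psum_m (a : Fin m → Bool) :
    psum w a m = ∑ i : Fin m, (if a i then w i else 0) := by
  rw [psum, ← Fin.sum_univ_eq_sum_range]
  exact Finset.sum_congr rfl fun i _ => by simp [ww]

end Aux
section Aux2
variable {m W : ℕ}

/-- vertex of the path of pattern `a` at level `k`. -/
def vert (W : ℕ) (w : Fin m → ℕ) (a : Fin m → Bool) (k : ℕ) : DV m W :=
  if hk : k ≤ m then some (⟨k, by omega⟩, ⟨min (psum w a k) W, by omega⟩) else none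

/-- label of the arc of the path of pattern `a` leaving level `k`. -/
def lab (a : Fin m → Bool) (k : ℕ) : Option (Fin m) :=
  if h : k < m then (if a ⟨k, h⟩ then some ⟨k, h⟩ else none) else none

variable (w : Fin m → ℕ) (a : Fin m → Bool)

lemma vert_of_le {k : ℕ} (hk : k ≤ m) :
    vert W w a k = some (⟨k, by omega⟩, ⟨min (psum w a k) W, by omega⟩) :=
  dif_pos hk

lemma vert_of_gt {k : ℕ} (hk : m < k) : vert W w a k = none :=
  dif_neg (by omega)

lemma vert_level {k : ℕ} {c : Fin (m+1)} {p : Fin (W+1)}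
    (h : vert W w a k = some (c, p)) : (c : ℕ) = k ∧ k ≤ m ∧ (p : ℕ) = min (psum w a k) W := by
  by_cases hk : k ≤ m
  · rw [vert_of_le w a hk] at h
    rw [Option.some.injEq, Prod.mk.injEq] at h
    obtain ⟨h1, h2⟩ := h
    refine ⟨by rw [← h1], hk, by rw [← h2]⟩
  · rw [vert_of_gt w a (by omega)] at h; exact absurd h (by simp)

lemma vert_inj {k k' : ℕ} (hk : k ≤ m) (hk' : k' ≤ m)
    (h : vert W w a k = vert W w a k') : k = k' := by
  rw [vert_of_le w a hk, vert_of_le w a hk'] at h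
  have := (Option.some.injEq _ _ ▸ h)
  have h2 := congrArg (fun x => (x.1 : ℕ)) this
  simpa using h2

lemma vert_zero : vert W w a 0 = some (0, 0) := by
  rw [vert_of_le w a (Nat.zero_le m)]
  simp [psum_zero]

end Aux2
section Aux3
variable {m W : ℕ} (w : Fin m → ℕ) (a : Fin m → Bool)

/-- unit flow along the path of pattern `a`. -/
def gFlow (W : ℕ) (w : Fin m → ℕ) (a : Fin m → Bool)
    (u v : DV m W) (l : Option (Fin m)) : ℕ :=
  ∑ i ∈ Finset.range (m+1),
    if u = vert W w a i ∧ v = vert W w a (i+1) ∧ l = lab a i then 1 else 0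

/-- inflow of a flow at a vertex. -/
def inF (f : DV m W → DV m W → Option (Fin m) → ℕ) (v : DV m W) : ℕ :=
  ∑ u : DV m W, ∑ l : Option (Fin m), f u v l

/-- outflow of a flow at a vertex. -/
def outF (f : DV m W → DV m W → Option (Fin m) → ℕ) (v : DV m W) : ℕ :=
  ∑ u : DV m W, ∑ l : Option (Fin m), f v u l

lemma inF_g (v : DV m W) :
    inF (gFlow W w a) v = ∑ i ∈ Finset.range (m+1), if v = vert W w a (i+1) then 1 else 0 := by
  rw [inF]
  simp only [gFlow]
  refine (Finset.sum_congr rfl fun u _ => Finset.sum_comm).trans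
    (Finset.sum_comm.trans (Finset.sum_congr rfl fun i _ => ?_))
  simp [ite_and, Finset.sum_ite_eq']

lemma outF_g (v : DV m W) :
    outF (gFlow W w a) v = ∑ i ∈ Finset.range (m+1), if v = vert W w a i then 1 else 0 := by
  rw [outF]
  simp only [gFlow]
  refine (Finset.sum_congr rfl fun u _ => Finset.sum_comm).trans
    (Finset.sum_comm.trans (Finset.sum_congr rfl fun i _ => ?_))
  simp [ite_and, Finset.sum_ite_eq']

end Aux3
section Aux4
variable {m W : ℕ} (w : Fin m → ℕ) (a : Fin m → Bool)

lemma outF_g_src : outF (gFlow W w a) (some (0, 0)) = 1 := by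
  rw [outF_g]
  have h1 : (∑ i ∈ Finset.range (m+1), if (some (0,0) : DV m W) = vert W w a i then 1 else 0)
      = if (some (0,0) : DV m W) = vert W w a 0 then 1 else 0 := by
    refine Finset.sum_eq_single 0 ?_ ?_
    · intro i hi hne
      refine if_neg fun h => hne ?_
      have hi' : i ≤ m := by have := Finset.mem_range.1 hi; omega
      exact (vert_inj w a (Nat.zero_le m) hi' ((vert_zero w a).trans h)).symm ▸ rfl
    · intro h; exact absurd (Finset.mem_range.2 (by omega)) h
  rw [h1, vert_zero, if_pos rfl]

lemma g_conserve (v : DV m W) (hv : v ≠ some (0, 0)) (hvn : v ≠ none) :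
    inF (gFlow W w a) v = outF (gFlow W w a) v := by
  rw [inF_g, outF_g]
  obtain ⟨⟨c, p⟩, rfl⟩ := Option.ne_none_iff_exists'.mp hvn
  rcases Nat.eq_zero_or_pos (c : ℕ) with hc | hc
  · have hp : (p : ℕ) ≠ 0 := by
      intro hp0
      exact hv (by rw [show c = 0 from Fin.ext hc, show p = 0 from Fin.ext hp0])
    rw [Finset.sum_eq_zero, Finset.sum_eq_zero]
    · intro i _
      refine if_neg fun h => ?_
      obtain ⟨h1, h2, h3⟩ := vert_level w a h.symm
      have hi0 : i = 0 := by omega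
      subst hi0
      rw [vert_zero] at h
      have := congrArg (fun x => ((x.getD (0,0)).2 : ℕ)) h
      simp [psum_zero] at this
      exact hp (by simp [this])
    · intro i _
      refine if_neg fun h => ?_
      obtain ⟨h1, _, _⟩ := vert_level w a h.symm
      omega
  · obtain ⟨k, hk⟩ : ∃ k, (c : ℕ) = k + 1 := ⟨(c : ℕ) - 1, by omega⟩
    have hkm : k + 1 ≤ m := by have := c.isLt; omega
    have h1 : (∑ i ∈ Finset.range (m+1), if some (c, p) = vert W w a (i+1) then 1 else 0)
        = if some (c, p) = vert W w a (k+1) then 1 else 0 := by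
      refine Finset.sum_eq_single k ?_ ?_
      · intro i hi hne
        refine if_neg fun h => ?_
        obtain ⟨h1, _, _⟩ := vert_level w a h.symm
        exact hne (by omega)
      · intro h; exact absurd (Finset.mem_range.2 (by omega)) h
    have h2 : (∑ i ∈ Finset.range (m+1), if some (c, p) = vert W w a i then 1 else 0)
        = if some (c, p) = vert W w a (k+1) then 1 else 0 := by
      refine Finset.sum_eq_single (k+1) ?_ ?_
      · intro i hi hne
        refine if_neg fun h => ?_
        obtain ⟨h1, _, _⟩ := vert_level w a h.symm
        exact hne (by omega)
      · intro h; exact absurd (Finset.mem_range.2 (by omega)) h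
    rw [h1, h2]

lemma g_label (j : Fin m) :
    (∑ u : DV m W, ∑ v : DV m W, gFlow W w a u v (some j)) = if a j then 1 else 0 := by
  simp only [gFlow]
  rw [show (∑ u : DV m W, ∑ v : DV m W, ∑ i ∈ Finset.range (m+1),
      if u = vert W w a i ∧ v = vert W w a (i+1) ∧ (some j : Option (Fin m)) = lab a i
      then 1 else 0)
    = ∑ i ∈ Finset.range (m+1), if (some j : Option (Fin m)) = lab a i then 1 else 0 from
    (Finset.sum_congr rfl fun u _ => Finset.sum_comm).trans
      (Finset.sum_comm.trans (Finset.sum_congr rfl fun i _ => by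
        simp [ite_and, Finset.sum_ite_eq']))]
  have h1 : (∑ i ∈ Finset.range (m+1),
        if (some j : Option (Fin m)) = lab a i then 1 else 0)
      = if (some j : Option (Fin m)) = lab a (j : ℕ) then 1 else 0 := by
    refine Finset.sum_eq_single (j : ℕ) ?_ ?_
    · intro i hi hne
      refine if_neg fun h => ?_
      rw [lab] at h
      split at h
      · split at h
        · rw [Option.some.injEq] at h
          exact hne (by rw [h])
        · exact absurd h (by simp)
      · exact absurd h (by simp)
    · intro h; exact absurd (Finset.mem_range.2 (by have := j.isLt; omega)) h
  rw [h1, lab, dif_pos j.isLt]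
  by_cases hj : a j
  · rw [Fin.eta, if_pos hj, if_pos rfl, if_pos hj]
  · rw [Fin.eta, if_neg hj, if_neg (by simp), if_neg hj]

end Aux4
section Aux5
variable {m W : ℕ} (w : Fin m → ℕ) (a : Fin m → Bool)

lemma arc_dArc (hfeas : psum w a m ≤ W) {i : ℕ} (hi : i ≤ m) :
    dArc m W w (vert W w a i) (vert W w a (i+1)) (lab a i) := by
  have hle : ∀ k, k ≤ m → min (psum w a k) W = psum w a k := fun k hk =>
    Nat.min_eq_left ((psum_mono w a hk).trans hfeas)
  rcases Nat.lt_or_ge i m with him | him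
  · rw [vert_of_le w a hi, vert_of_le w a (by omega : i + 1 ≤ m)]
    refine ⟨by simp, ?_⟩
    by_cases ha : a ⟨i, him⟩
    · refine Or.inr ⟨⟨i, him⟩, ?_, by simp, ?_⟩
      · rw [lab, dif_pos him, if_pos ha]
      · simp only [hle i hi, hle (i+1) (by omega)]
        rw [psum_succ, ww, dif_pos him, if_pos ha]
    · refine Or.inl ⟨?_, ?_⟩
      · rw [lab, dif_pos him, if_neg ha]
      · simp only [hle i hi, hle (i+1) (by omega)]
        rw [psum_succ, ww, dif_pos him, if_neg ha, Nat.add_zero]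
  · have him' : i = m := by omega
    subst him'
    rw [vert_of_le w a le_rfl, vert_of_gt w a (by omega)]
    exact ⟨by simp, by rw [lab, dif_neg (by omega)]⟩

lemma g_support (hfeas : psum w a m ≤ W) (u v : DV m W) (l : Option (Fin m))
    (h : gFlow W w a u v l ≠ 0) : dArc m W w u v l := by
  rw [gFlow] at h
  obtain ⟨i, hi, hne⟩ := Finset.exists_ne_zero_of_sum_ne_zero h
  have hcond : u = vert W w a i ∧ v = vert W w a (i+1) ∧ l = lab a i := by
    by_contra hc
    exact hne (if_neg hc)
  obtain ⟨rfl, rfl, rfl⟩ := hcond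
  exact arc_dArc w a hfeas (by have := Finset.mem_range.1 hi; omega)

lemma g_le (f : DV m W → DV m W → Option (Fin m) → ℕ)
    (hf : ∀ i ∈ Finset.range (m+1),
      1 ≤ f (vert W w a i) (vert W w a (i+1)) (lab a i))
    (u v : DV m W) (l : Option (Fin m)) : gFlow W w a u v l ≤ f u v l := by
  by_cases hex : ∃ i ∈ Finset.range (m+1),
      u = vert W w a i ∧ v = vert W w a (i+1) ∧ l = lab a i
  · obtain ⟨i0, hi0, rfl, rfl, rfl⟩ := hex
    have hi0' : i0 ≤ m := by have := Finset.mem_range.1 hi0; omega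
    have : gFlow W w a (vert W w a i0) (vert W w a (i0+1)) (lab a i0) = 1 := by
      rw [gFlow]
      have h1 : (∑ i ∈ Finset.range (m+1),
          if vert W w a i0 = vert W w a i ∧ vert W w a (i0+1) = vert W w a (i+1) ∧
            lab a i0 = lab a i then 1 else 0)
          = if vert W w a i0 = vert W w a i0 ∧ vert W w a (i0+1) = vert W w a (i0+1) ∧
            lab a i0 = lab a i0 then 1 else 0 := by
        refine Finset.sum_eq_single i0 ?_ ?_
        · intro i hi hne
          refine if_neg fun hc => hne ?_
          exact (vert_inj w a hi0' (by have := Finset.mem_range.1 hi; omega) hc.1).symm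
        · intro h; exact absurd hi0 h
      rw [h1, if_pos ⟨rfl, rfl, rfl⟩]
    rw [this]
    exact hf i0 hi0
  · have : gFlow W w a u v l = 0 := by
      rw [gFlow]
      refine Finset.sum_eq_zero fun i hi => if_neg fun hc => hex ⟨i, hi, hc⟩
    rw [this]
    exact Nat.zero_le _

end Aux5
section Aux6
variable {m W : ℕ} (w : Fin m → ℕ)

lemma sum_list_swap {α β : Type} (s : Finset β) (L : List α) (h : α → β → ℕ) :
    ∑ x ∈ s, (L.map (fun a => h a x)).sum = (L.map (fun a => ∑ x ∈ s, h a x)).sum := by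
  induction L with
  | nil => simp
  | cons a L ih => simp [Finset.sum_add_distrib, ih]

lemma pat_subset_flow (b : Fin m → ℕ) : patVals m W w b ⊆ flowVals m W w b := by
  rintro z ⟨L, hlen, hfeas, hdem⟩
  have hfeas' : ∀ a ∈ L, psum w a m ≤ W := fun a ha => by
    rw [psum_m]; exact hfeas a ha
  refine ⟨fun u v l => (L.map fun a => gFlow W w a u v l).sum, ?_, ?_, ?_, ?_⟩
  · intro u v l hn
    refine List.sum_eq_zero fun x hx => ?_
    obtain ⟨a, ha, rfl⟩ := List.mem_map.1 hx
    by_contra h0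
    exact hn (g_support w a (hfeas' a ha) u v l h0)
  · intro v hv hvn
    have h1 : (∑ u : DV m W, ∑ l : Option (Fin m), (L.map fun a => gFlow W w a u v l).sum)
        = (L.map fun a => inF (gFlow W w a) v).sum := by
      calc (∑ u : DV m W, ∑ l : Option (Fin m), (L.map fun a => gFlow W w a u v l).sum)
          = ∑ u : DV m W, (L.map fun a => ∑ l : Option (Fin m), gFlow W w a u v l).sum :=
            Finset.sum_congr rfl fun u _ => sum_list_swap _ _ _
        _ = _ := sum_list_swap _ _ _
    have h2 : (∑ u : DV m W, ∑ l : Option (Fin m), (L.map fun a => gFlow W w a v u l).sum)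
        = (L.map fun a => outF (gFlow W w a) v).sum := by
      calc (∑ u : DV m W, ∑ l : Option (Fin m), (L.map fun a => gFlow W w a v u l).sum)
          = ∑ u : DV m W, (L.map fun a => ∑ l : Option (Fin m), gFlow W w a v u l).sum :=
            Finset.sum_congr rfl fun u _ => sum_list_swap _ _ _
        _ = _ := sum_list_swap _ _ _
    rw [h1, h2]
    exact congrArg List.sum (List.map_congr_left fun a _ => g_conserve w a v hv hvn)
  · intro j
    have h1 : (∑ u : DV m W, ∑ v : DV m W, (L.map fun a => gFlow W w a u v (some j)).sum)
        = (L.map fun a => ∑ u : DV m W, ∑ v : DV m W, gFlow W w a u v (some j)).sum := by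
      calc (∑ u : DV m W, ∑ v : DV m W, (L.map fun a => gFlow W w a u v (some j)).sum)
          = ∑ u : DV m W, (L.map fun a => ∑ v : DV m W, gFlow W w a u v (some j)).sum :=
            Finset.sum_congr rfl fun u _ => sum_list_swap _ _ _
        _ = _ := sum_list_swap _ _ _
    rw [h1]
    rw [List.map_congr_left fun a _ => g_label w a j]
    exact hdem j
  · have h2 : (∑ v : DV m W, ∑ l : Option (Fin m),
        (L.map fun a => gFlow W w a (some (0,0)) v l).sum)
        = (L.map fun a => outF (gFlow W w a) (some (0,0))).sum := by
      calc (∑ v : DV m W, ∑ l : Option (Fin m),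
            (L.map fun a => gFlow W w a (some (0,0)) v l).sum)
          = ∑ v : DV m W, (L.map fun a => ∑ l : Option (Fin m),
              gFlow W w a (some (0,0)) v l).sum :=
            Finset.sum_congr rfl fun v _ => sum_list_swap _ _ _
        _ = _ := sum_list_swap _ _ _
    rw [h2, List.map_congr_left fun a _ => outF_g_src w a]
    simp [hlen]

end Aux6
section Aux7
variable {m W : ℕ} (w : Fin m → ℕ)

lemma le_outF (f : DV m W → DV m W → Option (Fin m) → ℕ) (u v : DV m W)
    (l : Option (Fin m)) : f u v l ≤ outF f u := by
  calc f u v l ≤ ∑ l' : Option (Fin m), f u v l' :=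
        Finset.single_le_sum (fun _ _ => Nat.zero_le _) (Finset.mem_univ l)
    _ ≤ outF f u :=
        Finset.single_le_sum (f := fun v' => ∑ l' : Option (Fin m), f u v' l')
          (fun _ _ => Nat.zero_le _) (Finset.mem_univ v)

lemma le_inF (f : DV m W → DV m W → Option (Fin m) → ℕ) (u v : DV m W)
    (l : Option (Fin m)) : f u v l ≤ inF f v := by
  calc f u v l ≤ ∑ l' : Option (Fin m), f u v l' :=
        Finset.single_le_sum (fun _ _ => Nat.zero_le _) (Finset.mem_univ l)
    _ ≤ inF f v :=
        Finset.single_le_sum (f := fun u' => ∑ l' : Option (Fin m), f u' v l')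
          (fun _ _ => Nat.zero_le _) (Finset.mem_univ u)

lemma flow_zero (f : DV m W → DV m W → Option (Fin m) → ℕ)
    (hsupp : ∀ u v l, ¬ dArc m W w u v l → f u v l = 0)
    (hcons : ∀ v : DV m W, v ≠ some (0, 0) → v ≠ none → inF f v = outF f v)
    (h0 : outF f (some (0, 0)) = 0) :
    ∀ u v l, f u v l = 0 := by
  have claim : ∀ k : ℕ, ∀ c : Fin (m+1), ∀ p : Fin (W+1), (c : ℕ) = k →
      outF f (some (c, p)) = 0 := by
    intro k
    induction k with
    | zero =>
      intro c p hc
      by_cases hs : (some (c, p) : DV m W) = some (0, 0)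
      · rw [hs]; exact h0
      · rw [← hcons _ hs (by simp)]
        refine Finset.sum_eq_zero fun u _ => Finset.sum_eq_zero fun l _ => ?_
        by_contra hne
        have hd : dArc m W w u (some (c, p)) l := by
          by_contra hnd; exact hne (hsupp _ _ _ hnd)
        match u, hd with
        | some (i, q), hd => exact absurd hd.1 (by omega)
    | succ k ih =>
      intro c p hc
      have hs : (some (c, p) : DV m W) ≠ some (0, 0) := by
        intro h
        rw [Option.some.injEq, Prod.mk.injEq] at h
        have := congrArg (fun x : Fin (m+1) => (x : ℕ)) h.1
        simp at this; subst this; simp at hc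
      rw [← hcons _ hs (by simp)]
      refine Finset.sum_eq_zero fun u _ => Finset.sum_eq_zero fun l _ => ?_
      by_contra hne
      have hd : dArc m W w u (some (c, p)) l := by
        by_contra hnd; exact hne (hsupp _ _ _ hnd)
      match u, hd with
      | some (i, q), hd =>
        have hik : (i : ℕ) = k := by have := hd.1; omega
        have := (le_outF f (some (i, q)) (some (c, p)) l).trans
          (le_of_eq (ih i q hik))
        omega
  intro u v l
  by_contra hne
  have hd : dArc m W w u v l := by
    by_contra hnd; exact hne (hsupp _ _ _ hnd)
  match u, hd with
  | some (i, q), hd =>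
    have := (le_outF f (some (i, q)) v l).trans (le_of_eq (claim (i : ℕ) i q rfl))
    omega

lemma psum_update (a : Fin m → Bool) (t : Fin m) (bt : Bool) {n : ℕ} (hn : n ≤ (t : ℕ)) :
    psum w (Function.update a t bt) n = psum w a n := by
  refine Finset.sum_congr rfl fun j hj => ?_
  have hj' : j < n := Finset.mem_range.1 hj
  rw [ww, ww]
  split
  · next h =>
    rw [Function.update_of_ne (by
      intro he
      have := congrArg (fun x : Fin m => (x : ℕ)) he
      simp only at this
      omega)]
  · rfl

lemma vert_update (a : Fin m → Bool) (t : Fin m) (bt : Bool) {n : ℕ} (hn : n ≤ (t : ℕ)) :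
    vert W w (Function.update a t bt) n = vert W w a n := by
  by_cases hk : n ≤ m
  · rw [vert_of_le w _ hk, vert_of_le w a hk]
    simp only [Option.some.injEq, Prod.mk.injEq, Fin.mk.injEq]
    exact ⟨trivial, by rw [psum_update w a t bt hn]⟩
  · rw [vert_of_gt w _ (by omega), vert_of_gt w a (by omega)]

lemma lab_update (a : Fin m → Bool) (t : Fin m) (bt : Bool) {n : ℕ} (hn : n < (t : ℕ)) :
    lab (Function.update a t bt) n = lab a n := by
  rw [lab, lab]
  split
  · next h =>
    rw [Function.update_of_ne (by
      intro he
      have := congrArg (fun x : Fin m => (x : ℕ)) he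
      simp only at this
      omega)]
  · rfl

end Aux7
section Aux8
variable {m W : ℕ} (w : Fin m → ℕ)

lemma extract (f : DV m W → DV m W → Option (Fin m) → ℕ)
    (hsupp : ∀ u v l, ¬ dArc m W w u v l → f u v l = 0)
    (hcons : ∀ v : DV m W, v ≠ some (0, 0) → v ≠ none → inF f v = outF f v)
    (hpos : 1 ≤ outF f (some (0, 0))) :
    ∃ a : Fin m → Bool, psum w a m ≤ W ∧
      ∀ i ∈ Finset.range (m+1), 1 ≤ f (vert W w a i) (vert W w a (i+1)) (lab a i) := by
  suffices claim : ∀ k, k ≤ m + 1 → ∃ a : Fin m → Bool, psum w a k ≤ W ∧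
      ∀ i, i < k → 1 ≤ f (vert W w a i) (vert W w a (i+1)) (lab a i) by
    obtain ⟨a, hp, ha⟩ := claim (m+1) le_rfl
    refine ⟨a, le_trans (psum_mono w a (by omega)) hp,
      fun i hi => ha i (Finset.mem_range.1 hi)⟩
  intro k
  induction k with
  | zero =>
    exact fun _ => ⟨fun _ => false, by rw [psum_zero]; exact Nat.zero_le W,
      fun i hi => absurd hi (by omega)⟩
  | succ k ih =>
    intro hk1
    have hk : k ≤ m := by omega
    obtain ⟨a, hp, ha⟩ := ih (by omega)
    have hvk : vert W w a k = some (⟨k, by omega⟩, ⟨psum w a k, by omega⟩) := by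
      rw [vert_of_le w a hk]
      simp only [Option.some.injEq, Prod.mk.injEq, Fin.mk.injEq]
      exact ⟨trivial, Nat.min_eq_left hp⟩
    have hout : 1 ≤ outF f (vert W w a k) := by
      rcases Nat.eq_zero_or_pos k with rfl | hk0
      · rw [vert_zero]; exact hpos
      · obtain ⟨k', rfl⟩ : ∃ k', k = k' + 1 := ⟨k - 1, by omega⟩
        have h1 : 1 ≤ inF f (vert W w a (k'+1)) :=
          le_trans (ha k' (by omega)) (le_inF f _ _ _)
        rw [← hcons]
        · exact h1
        · rw [hvk]
          intro he
          rw [Option.some.injEq, Prod.mk.injEq] at he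
          have := congrArg (fun x : Fin (m+1) => (x : ℕ)) he.1
          simp at this
        · rw [hvk]; simp
    have hne0 : (∑ u : DV m W, ∑ l : Option (Fin m), f (vert W w a k) u l) ≠ 0 := by
      have : outF f (vert W w a k) ≠ 0 := by omega
      exact this
    obtain ⟨u, -, hu⟩ := Finset.exists_ne_zero_of_sum_ne_zero hne0
    obtain ⟨l, -, hl⟩ := Finset.exists_ne_zero_of_sum_ne_zero hu
    have hf1 : 1 ≤ f (vert W w a k) u l := Nat.one_le_iff_ne_zero.2 hl
    have hd : dArc m W w (vert W w a k) u l := by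
      by_contra hnd; exact hl (hsupp _ _ _ hnd)
    rw [hvk] at hd hf1
    match u, hd, hf1 with
    | none, hd, hf1 =>
      have hkm : k = m := by simpa using hd.1
      refine ⟨a, ?_, ?_⟩
      · rw [psum_succ, ww, dif_neg (by omega), Nat.add_zero]; exact hp
      · intro i hi
        rcases Nat.lt_or_ge i k with h | h
        · exact ha i h
        · have him : i = k := by omega
          subst him
          have h1 : vert W w a (i+1) = none := vert_of_gt w a (by omega)
          have h2 : lab a i = none := by rw [lab]; exact dif_neg (by omega)
          rw [h1, h2, hvk]
          rw [hd.2] at hf1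
          exact hf1
    | some (i', p'), hd, hf1 =>
      obtain ⟨hi', hdisj⟩ := hd
      simp only [Fin.val_mk] at hi' hdisj
      have hkm : k < m := by have := i'.isLt; omega
      have hpW : (p' : ℕ) ≤ W := by have := p'.isLt; omega
      have build : ∀ bt : Bool,
          psum w (Function.update a ⟨k, hkm⟩ bt) (k+1) = (p' : ℕ) →
          lab (Function.update a ⟨k, hkm⟩ bt) k = l →
          ∃ a' : Fin m → Bool, psum w a' (k+1) ≤ W ∧
            ∀ i, i < k + 1 → 1 ≤ f (vert W w a' i) (vert W w a' (i+1)) (lab a' i) := by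
        intro bt hpnew hlab
        set a' := Function.update a ⟨k, hkm⟩ bt with ha'
        have ht : ((⟨k, hkm⟩ : Fin m) : ℕ) = k := rfl
        have hv1 : vert W w a' k = vert W w a k :=
          vert_update w a ⟨k, hkm⟩ bt (le_of_eq rfl)
        have hv2 : vert W w a' (k+1) = some (i', p') := by
          rw [vert_of_le w a' (by omega)]
          congr 1
          refine Prod.ext ?_ ?_
          · exact Fin.ext (by simp [hi'])
          · exact Fin.ext (by simp [hpnew, Nat.min_eq_left hpW])
        refine ⟨a', by rw [hpnew]; exact hpW, ?_⟩
        intro i hi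
        rcases Nat.lt_or_ge i k with h | h
        · rw [vert_update w a ⟨k, hkm⟩ bt (n := i) (by simp only [Fin.val_mk]; omega),
            vert_update w a ⟨k, hkm⟩ bt (n := i+1) (by simp only [Fin.val_mk]; omega),
            lab_update a ⟨k, hkm⟩ bt (n := i) (by simp only [Fin.val_mk]; omega)]
          exact ha i h
        · have hik : i = k := by omega
          subst hik
          rw [hv1, hv2, hlab, hvk]
          exact hf1
      rcases hdisj with ⟨hl0, hp'⟩ | ⟨j, hl0, hj, hp'⟩
      · refine build false ?_ ?_
        · rw [psum_succ, psum_update w a ⟨k, hkm⟩ false (le_of_eq rfl), ww, dif_pos hkm,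
            Function.update_self, if_neg (by simp), Nat.add_zero, hp']
        · rw [lab, dif_pos hkm, Function.update_self, if_neg (by simp), hl0]
      · have hjk : j = ⟨k, hkm⟩ := Fin.ext (by simp only [Fin.val_mk]; omega)
        refine build true ?_ ?_
        · rw [psum_succ, psum_update w a ⟨k, hkm⟩ true (le_of_eq rfl), ww, dif_pos hkm,
            Function.update_self, if_pos rfl, hp', hjk]
        · rw [lab, dif_pos hkm, Function.update_self, if_pos rfl, hl0, hjk]
  
end Aux8
section Aux9
variable {m W : ℕ} (w : Fin m → ℕ)

lemma decompose : ∀ z : ℕ, ∀ f : DV m W → DV m W → Option (Fin m) → ℕ,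
    (∀ u v l, ¬ dArc m W w u v l → f u v l = 0) →
    (∀ v : DV m W, v ≠ some (0, 0) → v ≠ none → inF f v = outF f v) →
    outF f (some (0, 0)) = z →
    ∃ L : List (Fin m → Bool), L.length = z ∧ (∀ a ∈ L, psum w a m ≤ W) ∧
      ∀ j : Fin m, (∑ u : DV m W, ∑ v : DV m W, f u v (some j)) ≤
        (L.map fun a => if a j then 1 else 0).sum := by
  intro z
  induction z with
  | zero =>
    intro f hsupp hcons hz
    refine ⟨[], rfl, by simp, fun j => ?_⟩
    have h0 := flow_zero w f hsupp hcons hz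
    simp [h0]
  | succ z ih =>
    intro f hsupp hcons hz
    obtain ⟨a, hfeas, harc⟩ := extract w f hsupp hcons (by omega)
    have hle : ∀ u v l, gFlow W w a u v l ≤ f u v l := g_le w a f harc
    have hsum : ∀ u v l, f u v l = (f u v l - gFlow W w a u v l) + gFlow W w a u v l :=
      fun u v l => (Nat.sub_add_cancel (hle u v l)).symm
    have hIn : ∀ v, inF f v =
        inF (fun u v l => f u v l - gFlow W w a u v l) v + inF (gFlow W w a) v := by
      intro v
      rw [inF, inF, inF, ← Finset.sum_add_distrib]
      refine Finset.sum_congr rfl fun u _ => ?_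
      rw [← Finset.sum_add_distrib]
      exact Finset.sum_congr rfl fun l _ => hsum u v l
    have hOut : ∀ v, outF f v =
        outF (fun u v l => f u v l - gFlow W w a u v l) v + outF (gFlow W w a) v := by
      intro v
      rw [outF, outF, outF, ← Finset.sum_add_distrib]
      refine Finset.sum_congr rfl fun u _ => ?_
      rw [← Finset.sum_add_distrib]
      exact Finset.sum_congr rfl fun l _ => hsum v u l
    have hsupp' : ∀ u v l, ¬ dArc m W w u v l →
        (fun u v l => f u v l - gFlow W w a u v l) u v l = 0 := by
      intro u v l h
      simp only
      rw [hsupp u v l h]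
      exact Nat.zero_sub _
    have hcons' : ∀ v : DV m W, v ≠ some (0, 0) → v ≠ none →
        inF (fun u v l => f u v l - gFlow W w a u v l) v =
        outF (fun u v l => f u v l - gFlow W w a u v l) v := by
      intro v hv hvn
      have h := hcons v hv hvn
      rw [hIn v, hOut v, g_conserve w a v hv hvn] at h
      exact Nat.add_right_cancel h
    have hz' : outF (fun u v l => f u v l - gFlow W w a u v l) (some (0, 0)) = z := by
      have h := hOut (some (0, 0))
      rw [hz, outF_g_src w a] at h
      omega
    obtain ⟨L', hlen, hfeasL, hcnt⟩ := ih _ hsupp' hcons' hz'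
    refine ⟨a :: L', by simp [hlen], ?_, ?_⟩
    · intro a' ha'
      rcases List.mem_cons.1 ha' with rfl | h
      · exact hfeas
      · exact hfeasL a' h
    · intro j
      have hsplit : (∑ u : DV m W, ∑ v : DV m W, f u v (some j))
          = (∑ u : DV m W, ∑ v : DV m W, (f u v (some j) - gFlow W w a u v (some j)))
            + (∑ u : DV m W, ∑ v : DV m W, gFlow W w a u v (some j)) := by
        rw [← Finset.sum_add_distrib]
        refine Finset.sum_congr rfl fun u _ => ?_
        rw [← Finset.sum_add_distrib]
        exact Finset.sum_congr rfl fun v _ => hsum u v (some j)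
      rw [hsplit, g_label w a j]
      simp only [List.map_cons, List.sum_cons]
      have h : (∑ u : DV m W, ∑ v : DV m W,
          (f u v (some j) - gFlow W w a u v (some j)))
          ≤ (L'.map fun a => if a j then 1 else 0).sum := hcnt j
      exact le_trans (Nat.add_le_add_right h _) (le_of_eq (Nat.add_comm _ _))

lemma flow_subset_pat (b : Fin m → ℕ) : flowVals m W w b ⊆ patVals m W w b := by
  rintro z ⟨f, hsupp, hcons, hdem, hz⟩
  obtain ⟨L, hlen, hfeasL, hcnt⟩ := decompose w z f hsupp hcons hz.symm
  exact ⟨L, hlen, fun a ha => by rw [← psum_m]; exact hfeasL a ha,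
    fun j => le_trans (hdem j) (hcnt j)⟩

end Aux9

/-- The arc-flow formulation over the DP graph is equivalent to the Gilmore-Gomory
formulation over binary patterns: the optimal integer values coincide. -/
theorem arcflow_eq_gilmore_gomory (m W : ℕ) (w b : Fin m → ℕ)
    (hw : ∀ i, 1 ≤ w i ∧ w i ≤ W) :
    sInf (flowVals m W w b) = sInf (patVals m W w b) := by
  rw [Set.Subset.antisymm (flow_subset_pat w b) (pat_subset_flow w b)]
end

section
/- The LP relaxations of the arc-flow formulation and of the Gilmore-Gomory formulation over the same set of patterns have equal optimal values. -/
/-- Paths as lists of arcs: `APath src tgt u v P` means `P` is a list of consecutive arcs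
leading from `u` to `v`. -/
inductive APath {V A : Type} (src tgt : A → V) : V → V → List A → Prop
  | nil (v : V) : APath src tgt v v []
  | cons {u v : V} {e : A} {P : List A} :
      src e = u → APath src tgt (tgt e) v P → APath src tgt u v (e :: P)


section helpers
variable {V A : Type} {src tgt : A → V} {r : V → ℕ}

theorem APath.append {u v : V} {ls : List A} (h : APath src tgt u v ls) (e : A)
    (he : src e = v) : APath src tgt u (tgt e) (ls ++ [e]) := by
  induction h with
  | nil w => exact APath.cons he (APath.nil _)
  | cons h1 h2 ih => exact APath.cons h1 (ih he)

theorem APath.trans {u v w : V} {l1 l2 : List A} (h : APath src tgt u v l1)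
    (h' : APath src tgt v w l2) : APath src tgt u w (l1 ++ l2) := by
  induction h with
  | nil x => exact h'
  | cons h1 h2 ih => exact APath.cons h1 (ih h')

theorem apath_count [DecidableEq V] {u v : V} {ls : List A} (h : APath src tgt u v ls) (w : V) :
    ls.countP (fun e => decide (tgt e = w)) + (if u = w then 1 else 0) =
    ls.countP (fun e => decide (src e = w)) + (if v = w then 1 else 0) := by
  induction h with
  | nil x => simp
  | cons h1 h2 ih =>
    simp only [List.countP_cons]
    subst h1
    simp only [decide_eq_true_eq]
    omega

theorem apath_rank_le (hr : ∀ e, r (src e) < r (tgt e)) {u v : V} {ls : List A}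
    (h : APath src tgt u v ls) : ∀ e ∈ ls, r u ≤ r (src e) := by
  induction h with
  | nil => simp
  | @cons u v e P h1 h2 ih =>
    intro e' he'
    rcases List.mem_cons.1 he' with h | h
    · subst h; rw [h1]
    · have h3 := ih e' h; have h4 := hr e; rw [h1] at h4; omega

theorem apath_rank_mono (hr : ∀ e, r (src e) < r (tgt e)) {u v : V} {ls : List A}
    (h : APath src tgt u v ls) : r u ≤ r v := by
  induction h with
  | nil => exact le_refl _
  | cons h1 h2 ih => have := hr ‹_›; subst h1; omega

theorem apath_rank_lt (hr : ∀ e, r (src e) < r (tgt e)) {u v : V} {ls : List A}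
    (h : APath src tgt u v ls) (hne : ls ≠ []) : r u < r v := by
  cases h with
  | nil => simp at hne
  | cons h1 h2 => have := apath_rank_mono hr h2; have := hr ‹_›; subst h1; omega

theorem apath_nodup (hr : ∀ e, r (src e) < r (tgt e)) {u v : V} {ls : List A}
    (h : APath src tgt u v ls) : ls.Nodup := by
  have hp : ls.Pairwise (fun e e' => r (tgt e) ≤ r (src e')) := by
    induction h with
    | nil => exact List.Pairwise.nil
    | cons h1 h2 ih =>
      exact List.Pairwise.cons (fun e' he' => apath_rank_le hr h2 e' he') ih
  exact hp.imp (fun {a b} hab => by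
    intro hEq; subst hEq; exact absurd hab (by have := hr a; omega))

theorem sum_count [Fintype A] [DecidableEq A] (p : A → Prop) [DecidablePred p] (ls : List A) :
    ∑ e ∈ Finset.univ.filter (fun e => p e), ls.count e = ls.countP (fun e => decide (p e)) := by
  induction ls with
  | nil => simp
  | cons a ls ih =>
    simp only [List.count_cons, List.countP_cons, Finset.sum_add_distrib, ih]
    congr 1
    simp only [beq_iff_eq, Finset.sum_ite_eq, Finset.mem_filter, Finset.mem_univ, true_and,
      decide_eq_true_eq]

theorem count_map_label {m : ℕ} (label : A → Option (Fin m)) (i : Fin m) (ls : List A) :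
    (ls.map label).count (some i) = ls.countP (fun e => decide (label e = some i)) := by
  induction ls with
  | nil => simp
  | cons a ls ih => simp [List.count_cons, List.countP_cons, ih]

open Classical in
theorem sum_indicator_count [Fintype A] (p : A → Prop) [DecidablePred p] (ls : List A)
    (hnd : ls.Nodup) (c : ℝ) :
    ∑ e ∈ Finset.univ.filter (fun e => p e), (if e ∈ ls then c else 0) =
      c * (ls.countP (fun e => decide (p e)) : ℝ) := by
  have key : ∀ e, (if e ∈ ls then c else 0) = c * (ls.count e : ℝ) := by
    intro e; by_cases h : e ∈ ls
    · simp [h, List.count_eq_one_of_mem hnd h]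
    · simp [h, List.count_eq_zero_of_not_mem h]
  rw [Finset.sum_congr rfl (fun e _ => key e), ← Finset.mul_sum, ← Nat.cast_sum, sum_count]

end helpers

section extract
variable {V A : Type} [Fintype V] [Fintype A] [DecidableEq V]
variable (src tgt : A → V) (r : V → ℕ) (s t : V) (f : A → ℝ)

theorem forward_path (hr : ∀ e, r (src e) < r (tgt e)) (hsrc : ∀ e, tgt e ≠ s)
    (hf0 : ∀ e, 0 ≤ f e)
    (hcons : ∀ v, v ≠ s → v ≠ t →
      ∑ e ∈ Finset.univ.filter (fun e => tgt e = v), f e =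
      ∑ e ∈ Finset.univ.filter (fun e => src e = v), f e) :
    ∀ n (u : V), (Finset.univ.sup r) - r u < n →
      (u = t ∨ 0 < ∑ e ∈ Finset.univ.filter (fun e => src e = u), f e) →
      ∃ ls, APath src tgt u t ls ∧ ∀ e ∈ ls, 0 < f e := by
  intro n
  induction n with
  | zero => intro u h; omega
  | succ n ih =>
    intro u hu hcase
    rcases hcase with h | h
    · exact ⟨[], h ▸ APath.nil u, by simp⟩
    · obtain ⟨e, he, hfe⟩ : ∃ e ∈ Finset.univ.filter (fun e => src e = u), 0 < f e := by
        by_contra hc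
        push_neg at hc
        have : ∑ e ∈ Finset.univ.filter (fun e => src e = u), f e ≤ 0 :=
          Finset.sum_nonpos (fun e he => hc e he)
        linarith
      simp only [Finset.mem_filter, Finset.mem_univ, true_and] at he
      have hvle : r (tgt e) ≤ Finset.univ.sup r := Finset.le_sup (Finset.mem_univ _)
      have hru : r u < r (tgt e) := he ▸ hr e
      have hmeas : Finset.univ.sup r - r (tgt e) < n := by omega
      have hcase' : tgt e = t ∨ 0 < ∑ e' ∈ Finset.univ.filter (fun e' => src e' = tgt e), f e' := by
        by_cases hT : tgt e = t
        · exact Or.inl hT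
        · refine Or.inr ?_
          rw [← hcons (tgt e) (hsrc e) hT]
          have : f e ≤ ∑ e' ∈ Finset.univ.filter (fun e' => tgt e' = tgt e), f e' :=
            Finset.single_le_sum (fun e' _ => hf0 e') (by simp)
          linarith
      obtain ⟨ls, hls, hpos⟩ := ih (tgt e) hmeas hcase'
      exact ⟨e :: ls, APath.cons he hls, by
        intro e' he'
        rcases List.mem_cons.1 he' with h' | h'
        · subst h'; exact hfe
        · exact hpos e' h'⟩

theorem backward_path (hr : ∀ e, r (src e) < r (tgt e)) (htgt : ∀ e, src e ≠ t)
    (hf0 : ∀ e, 0 ≤ f e)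
    (hcons : ∀ v, v ≠ s → v ≠ t →
      ∑ e ∈ Finset.univ.filter (fun e => tgt e = v), f e =
      ∑ e ∈ Finset.univ.filter (fun e => src e = v), f e) :
    ∀ n (u : V), r u < n →
      (u = s ∨ 0 < ∑ e ∈ Finset.univ.filter (fun e => tgt e = u), f e) →
      ∃ ls, APath src tgt s u ls ∧ ∀ e ∈ ls, 0 < f e := by
  intro n
  induction n with
  | zero => intro u h; omega
  | succ n ih =>
    intro u hu hcase
    rcases hcase with h | h
    · exact ⟨[], h ▸ APath.nil u, by simp⟩
    · obtain ⟨e, he, hfe⟩ : ∃ e ∈ Finset.univ.filter (fun e => tgt e = u), 0 < f e := by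
        by_contra hc
        push_neg at hc
        have : ∑ e ∈ Finset.univ.filter (fun e => tgt e = u), f e ≤ 0 :=
          Finset.sum_nonpos (fun e he => hc e he)
        linarith
      simp only [Finset.mem_filter, Finset.mem_univ, true_and] at he
      have hru : r (src e) < r u := he ▸ hr e
      have hmeas : r (src e) < n := by omega
      have hcase' : src e = s ∨ 0 < ∑ e' ∈ Finset.univ.filter (fun e' => tgt e' = src e), f e' := by
        by_cases hS : src e = s
        · exact Or.inl hS
        · refine Or.inr ?_
          rw [hcons (src e) hS (htgt e)]
          have : f e ≤ ∑ e' ∈ Finset.univ.filter (fun e' => src e' = src e), f e' :=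
            Finset.single_le_sum (fun e' _ => hf0 e') (by simp)
          linarith
      obtain ⟨ls, hls, hpos⟩ := ih (src e) hmeas hcase'
      refine ⟨ls ++ [e], he ▸ hls.append e rfl, ?_⟩
      intro e' he'
      rcases List.mem_append.1 he' with h' | h'
      · exact hpos e' h'
      · simp at h'; subst h'; exact hfe

end extract

section decomp
variable {V A : Type} [Fintype V] [Fintype A] [DecidableEq V]

open Classical in
theorem flow_decomp (m : ℕ) (src tgt : A → V) (label : A → Option (Fin m)) (s t : V)
    (r : V → ℕ) (hr : ∀ e, r (src e) < r (tgt e))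
    (hsrc : ∀ e, tgt e ≠ s) (htgt : ∀ e, src e ≠ t)
    (J : Finset (Fin m → Bool))
    (h1 : ∀ ls, APath src tgt s t ls →
      ∃ a ∈ J, ∀ i : Fin m, (ls.map label).count (some i) = (if a i then 1 else 0)) :
    ∀ n (f : A → ℝ), (Finset.univ.filter (fun e => 0 < f e)).card ≤ n → (∀ e, 0 ≤ f e) →
      (∀ v, v ≠ s → v ≠ t →
        ∑ e ∈ Finset.univ.filter (fun e => tgt e = v), f e =
        ∑ e ∈ Finset.univ.filter (fun e => src e = v), f e) →
      ∃ x : (Fin m → Bool) → ℝ, (∀ a, 0 ≤ x a) ∧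
        (∀ i : Fin m, ∑ a ∈ J, (if a i then x a else 0) =
          ∑ e ∈ Finset.univ.filter (fun e => label e = some i), f e) ∧
        (∑ a ∈ J, x a = ∑ e ∈ Finset.univ.filter (fun e => src e = s), f e) := by
  intro n
  induction n with
  | zero =>
    intro f hcard hf0 hcons
    have hzero : ∀ e, f e = 0 := by
      intro e
      by_contra hne
      have : e ∈ Finset.univ.filter (fun e => 0 < f e) := by
        simp [lt_of_le_of_ne (hf0 e) (Ne.symm hne)]
      have := Finset.card_pos.2 ⟨e, this⟩
      omega
    refine ⟨0, fun a => le_refl 0, fun i => ?_, ?_⟩ <;>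
      simp [Finset.sum_congr rfl fun e _ => hzero e]
  | succ n ih =>
    intro f hcard hf0 hcons
    by_cases hsupp : ∀ e, f e = 0
    · refine ⟨0, fun a => le_refl 0, fun i => ?_, ?_⟩ <;>
        simp [Finset.sum_congr rfl fun e _ => hsupp e]
    push_neg at hsupp
    obtain ⟨e0, he0⟩ := hsupp
    have hfe0 : 0 < f e0 := lt_of_le_of_ne (hf0 e0) (Ne.symm he0)
    -- backward path to src e0
    have hb : src e0 = s ∨ 0 < ∑ e' ∈ Finset.univ.filter (fun e' => tgt e' = src e0), f e' := by
      by_cases hS : src e0 = s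
      · exact Or.inl hS
      · refine Or.inr ?_
        rw [hcons (src e0) hS (htgt e0)]
        have : f e0 ≤ ∑ e' ∈ Finset.univ.filter (fun e' => src e' = src e0), f e' :=
          Finset.single_le_sum (fun e' _ => hf0 e') (by simp)
        linarith
    obtain ⟨ls1, hls1, hpos1⟩ := backward_path src tgt r s t f hr htgt hf0 hcons
      (r (src e0) + 1) (src e0) (by omega) hb
    -- forward path from tgt e0
    have hfwd : tgt e0 = t ∨ 0 < ∑ e' ∈ Finset.univ.filter (fun e' => src e' = tgt e0), f e' := by
      by_cases hT : tgt e0 = t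
      · exact Or.inl hT
      · refine Or.inr ?_
        rw [← hcons (tgt e0) (hsrc e0) hT]
        have : f e0 ≤ ∑ e' ∈ Finset.univ.filter (fun e' => tgt e' = tgt e0), f e' :=
          Finset.single_le_sum (fun e' _ => hf0 e') (by simp)
        linarith
    obtain ⟨ls2, hls2, hpos2⟩ := forward_path src tgt r s t f hr hsrc hf0 hcons
      (Finset.univ.sup r - r (tgt e0) + 1) (tgt e0) (by omega) hfwd
    set ls : List A := ls1 ++ e0 :: ls2 with hls_def
    have hpath : APath src tgt s t ls := hls1.trans (APath.cons rfl hls2)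
    have hmem0 : e0 ∈ ls := by simp [hls_def]
    have hlsne : ls ≠ [] := by simp [hls_def]
    have hposls : ∀ e ∈ ls, 0 < f e := by
      intro e he
      rcases List.mem_append.1 he with h' | h'
      · exact hpos1 e h'
      · rcases List.mem_cons.1 h' with h'' | h''
        · subst h''; exact hfe0
        · exact hpos2 e h''
    have hst : s ≠ t := fun h => by
      have := apath_rank_lt hr hpath hlsne; rw [h] at this; omega
    have hnd : ls.Nodup := apath_nodup hr hpath
    obtain ⟨a, haJ, hcnt⟩ := h1 ls hpath
    -- minimum flow on the path
    obtain ⟨estar, hestar, hmin⟩ := ls.toFinset.exists_min_image f ⟨e0, List.mem_toFinset.2 hmem0⟩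
    rw [List.mem_toFinset] at hestar
    set δ : ℝ := f estar with hδ_def
    have hδpos : 0 < δ := hposls estar hestar
    have hδle : ∀ e ∈ ls, δ ≤ f e := fun e he => hmin e (List.mem_toFinset.2 he)
    set f' : A → ℝ := fun e => f e - (if e ∈ ls then δ else 0) with hf'_def
    have hf'0 : ∀ e, 0 ≤ f' e := by
      intro e
      simp only [hf'_def]
      by_cases h : e ∈ ls
      · simp only [h, if_pos]; linarith [hδle e h]
      · simp [h, hf0 e]
    have hf'le : ∀ e, f' e ≤ f e := by
      intro e; simp only [hf'_def]
      by_cases h : e ∈ ls <;> simp [h, le_of_lt hδpos]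
    -- sum on filters
    have hsum : ∀ (p : A → Prop) [DecidablePred p],
        ∑ e ∈ Finset.univ.filter (fun e => p e), f' e =
        ∑ e ∈ Finset.univ.filter (fun e => p e), f e -
          δ * (ls.countP (fun e => decide (p e)) : ℝ) := by
      intro p _
      simp only [hf'_def, Finset.sum_sub_distrib]
      rw [sum_indicator_count p ls hnd δ]
    have hcons' : ∀ v, v ≠ s → v ≠ t →
        ∑ e ∈ Finset.univ.filter (fun e => tgt e = v), f' e =
        ∑ e ∈ Finset.univ.filter (fun e => src e = v), f' e := by
      intro v hvs hvt
      rw [hsum, hsum, hcons v hvs hvt]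
      have := apath_count hpath v
      rw [if_neg (Ne.symm hvs), if_neg (Ne.symm hvt)] at this
      simp only [add_zero] at this
      rw [this]
    -- support decreases
    have hss : Finset.univ.filter (fun e => 0 < f' e) ⊂ Finset.univ.filter (fun e => 0 < f e) := by
      constructor
      · intro e he
        simp only [Finset.mem_filter, Finset.mem_univ, true_and] at he ⊢
        exact lt_of_lt_of_le he (hf'le e)
      · intro hsub
        have h1' : estar ∈ Finset.univ.filter (fun e => 0 < f e) := by
          simp [hposls estar hestar]
        have h2' : f' estar = 0 := by simp [hf'_def, hestar, hδ_def]
        have := hsub h1'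
        simp only [Finset.mem_filter, Finset.mem_univ, true_and] at this
        linarith
    have hcard' : (Finset.univ.filter (fun e => 0 < f' e)).card ≤ n := by
      have := Finset.card_lt_card hss
      omega
    obtain ⟨x', hx'0, hx'lab, hx'val⟩ := ih f' hcard' hf'0 hcons'
    refine ⟨fun p => x' p + if p = a then δ else 0, ?_, ?_, ?_⟩
    · intro p
      by_cases h : p = a
      · subst h; simpa using add_nonneg (hx'0 p) hδpos.le
      · simpa [h] using hx'0 p
    · intro i
      have step : ∑ p ∈ J, (if p i then (x' p + if p = a then δ else 0) else 0) =
          (∑ p ∈ J, (if p i then x' p else 0)) + (if a i then δ else 0) := by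
        have e1 : ∀ p : Fin m → Bool, (if p i then (x' p + if p = a then δ else 0) else 0) =
            (if p i then x' p else 0) + (if p = a then (if p i then δ else 0) else 0) := by
          intro p
          by_cases h2 : p = a
          · subst h2; by_cases h : p i <;> simp [h]
          · by_cases h : p i <;> simp [h, h2]
        rw [Finset.sum_congr rfl (fun p _ => e1 p), Finset.sum_add_distrib,
          Finset.sum_ite_eq' J a (fun p => if p i then δ else 0), if_pos haJ]
      rw [step, hx'lab i, hsum]
      have : (ls.countP (fun e => decide (label e = some i)) : ℝ) = if a i then 1 else 0 := by
        rw [← count_map_label, hcnt i]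
        by_cases h : a i <;> simp [h]
      rw [this]
      by_cases h : a i <;> simp [h]
    · have step : ∑ p ∈ J, (x' p + if p = a then δ else 0) = (∑ p ∈ J, x' p) + δ := by
        rw [Finset.sum_add_distrib, Finset.sum_ite_eq' J a (fun _ => δ), if_pos haJ]
      rw [step, hx'val, hsum]
      have hcp : ls.countP (fun e => decide (src e = s)) = 1 := by
        have hident := apath_count hpath s
        rw [if_pos rfl, if_neg (Ne.symm hst)] at hident
        have hz : ls.countP (fun e => decide (tgt e = s)) = 0 := by
          rw [List.countP_eq_zero]
          intro e _
          simp [hsrc e]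
        omega
      rw [hcp]
      ring

end decomp
section patflow
variable {V A : Type} [Fintype V] [Fintype A] [DecidableEq V]

open Classical in
theorem pattern_to_flow (m : ℕ) (src tgt : A → V) (label : A → Option (Fin m)) (s t : V)
    (r : V → ℕ) (hr : ∀ e, r (src e) < r (tgt e))
    (hsrc : ∀ e, tgt e ≠ s)
    (J : Finset (Fin m → Bool))
    (h2 : ∀ a ∈ J, ∃ ls, APath src tgt s t ls ∧
      ∀ i : Fin m, (ls.map label).count (some i) = (if a i then 1 else 0))
    (x : (Fin m → Bool) → ℝ) (hx0 : ∀ a, 0 ≤ x a) :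
    ∃ f : A → ℝ, (∀ e, 0 ≤ f e) ∧
      (∀ v, v ≠ s → v ≠ t →
        ∑ e ∈ Finset.univ.filter (fun e => tgt e = v), f e =
        ∑ e ∈ Finset.univ.filter (fun e => src e = v), f e) ∧
      (∀ i : Fin m, ∑ e ∈ Finset.univ.filter (fun e => label e = some i), f e =
        ∑ a ∈ J, (if a i then x a else 0)) ∧
      (∑ e ∈ Finset.univ.filter (fun e => src e = s), f e ≤ ∑ a ∈ J, x a) := by
  set ch : (Fin m → Bool) → List A := fun a => if h : a ∈ J then (h2 a h).choose else []
    with hch_def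
  have hch : ∀ a ∈ J, APath src tgt s t (ch a) ∧
      ∀ i : Fin m, ((ch a).map label).count (some i) = (if a i then 1 else 0) := by
    intro a ha
    simp only [hch_def, dif_pos ha]
    exact (h2 a ha).choose_spec
  set f : A → ℝ := fun e => ∑ a ∈ J, (if e ∈ ch a then x a else 0) with hf_def
  have hnd : ∀ a ∈ J, (ch a).Nodup := fun a ha => apath_nodup hr (hch a ha).1
  have hsum : ∀ (p : A → Prop) [DecidablePred p],
      ∑ e ∈ Finset.univ.filter (fun e => p e), f e =
      ∑ a ∈ J, x a * (((ch a).countP (fun e => decide (p e)) : ℕ) : ℝ) := by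
    intro p _
    simp only [hf_def]
    rw [Finset.sum_comm]
    exact Finset.sum_congr rfl fun a ha => sum_indicator_count p (ch a) (hnd a ha) (x a)
  refine ⟨f, ?_, ?_, ?_, ?_⟩
  · intro e
    exact Finset.sum_nonneg fun a _ => by by_cases h : e ∈ ch a <;> simp [h, hx0 a]
  · intro v hvs hvt
    rw [hsum, hsum]
    refine Finset.sum_congr rfl fun a ha => ?_
    have := apath_count (hch a ha).1 v
    rw [if_neg (Ne.symm hvs), if_neg (Ne.symm hvt)] at this
    simp only [add_zero] at this
    rw [this]
  · intro i
    rw [hsum]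
    refine Finset.sum_congr rfl fun a ha => ?_
    have : (ch a).countP (fun e => decide (label e = some i)) = if a i then 1 else 0 := by
      rw [← count_map_label, (hch a ha).2 i]
    rw [this]
    by_cases h : a i <;> simp [h]
  · rw [hsum]
    refine Finset.sum_le_sum fun a ha => ?_
    have hc : (ch a).countP (fun e => decide (src e = s)) ≤ 1 := by
      have hident := apath_count (hch a ha).1 s
      rw [if_pos rfl] at hident
      have hz : (ch a).countP (fun e => decide (tgt e = s)) = 0 := by
        rw [List.countP_eq_zero]
        intro e _
        simp [hsrc e]
      rw [hz] at hident
      rcases eq_or_ne t s with h | h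
      · rw [if_pos h] at hident; omega
      · rw [if_neg h] at hident; omega
    calc x a * (((ch a).countP (fun e => decide (src e = s)) : ℕ) : ℝ)
        ≤ x a * 1 := by
          apply mul_le_mul_of_nonneg_left _ (hx0 a)
          exact_mod_cast hc
      _ = x a := mul_one _

end patflow

theorem sInf_eq_of_dominates {S T : Set ℝ} (hS : ∀ z ∈ S, 0 ≤ z) (hT : ∀ z ∈ T, 0 ≤ z)
    (hST : ∀ z ∈ S, ∃ w ∈ T, w ≤ z) (hTS : ∀ z ∈ T, ∃ w ∈ S, w ≤ z) : sInf S = sInf T := by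
  by_cases hSne : S.Nonempty
  · obtain ⟨z, hz⟩ := hSne
    obtain ⟨w, hw, _⟩ := hST z hz
    have hTne : T.Nonempty := ⟨w, hw⟩
    have hbS : BddBelow S := ⟨0, fun z hz => hS z hz⟩
    have hbT : BddBelow T := ⟨0, fun z hz => hT z hz⟩
    apply le_antisymm
    · apply le_csInf hTne
      intro w hw
      obtain ⟨z', hz', hle⟩ := hTS w hw
      exact (csInf_le hbS hz').trans hle
    · apply le_csInf ⟨z, hz⟩
      intro z' hz'
      obtain ⟨w', hw', hle⟩ := hST z' hz'
      exact (csInf_le hbT hw').trans hle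
  · have hTne : ¬ T.Nonempty := by
      intro ⟨w, hw⟩
      obtain ⟨z, hz, _⟩ := hTS w hw
      exact hSne ⟨z, hz⟩
    rw [Set.not_nonempty_iff_eq_empty] at hSne hTne
    rw [hSne, hTne]
/-- The LP relaxations of the arc-flow formulation and of the Gilmore-Gomory pattern
formulation have equal optimal values, whenever the graph is a DAG (with source `s`, sink `t`)
whose `s`-`t` paths are in label-preserving correspondence with the pattern set `J`:
every `s`-`t` path carries the item labels of some pattern in `J` (each item at most once),
and every pattern of `J` is carried by some `s`-`t` path. -/
theorem arcflow_lp_eq_pattern_lp {V A : Type} [Fintype V] [Fintype A] [DecidableEq V]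
    (m : ℕ) (src tgt : A → V) (label : A → Option (Fin m)) (s t : V)
    (r : V → ℕ) (hr : ∀ e, r (src e) < r (tgt e))
    (hsrc : ∀ e, tgt e ≠ s) (htgt : ∀ e, src e ≠ t)
    (J : Finset (Fin m → Bool)) (b : Fin m → ℕ)
    (h1 : ∀ ls, APath src tgt s t ls →
      ∃ a ∈ J, ∀ i : Fin m, (ls.map label).count (some i) = (if a i then 1 else 0))
    (h2 : ∀ a ∈ J, ∃ ls, APath src tgt s t ls ∧
      ∀ i : Fin m, (ls.map label).count (some i) = (if a i then 1 else 0)) :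
    sInf {z : ℝ | ∃ f : A → ℝ, (∀ e, 0 ≤ f e) ∧
        (∀ v, v ≠ s → v ≠ t →
          ∑ e ∈ Finset.univ.filter (fun e => tgt e = v), f e =
          ∑ e ∈ Finset.univ.filter (fun e => src e = v), f e) ∧
        (∀ i : Fin m, (b i : ℝ) ≤ ∑ e ∈ Finset.univ.filter (fun e => label e = some i), f e) ∧
        z = ∑ e ∈ Finset.univ.filter (fun e => src e = s), f e} =
    sInf {z : ℝ | ∃ x : (Fin m → Bool) → ℝ, (∀ a, 0 ≤ x a) ∧
        (∀ i, (b i : ℝ) ≤ ∑ a ∈ J, (if a i then x a else 0)) ∧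
        z = ∑ a ∈ J, x a} := by
  classical
  apply sInf_eq_of_dominates
  · rintro z ⟨f, hf0, -, -, rfl⟩
    exact Finset.sum_nonneg fun e _ => hf0 e
  · rintro z ⟨x, hx0, -, rfl⟩
    exact Finset.sum_nonneg fun a _ => hx0 a
  · rintro z ⟨f, hf0, hcons, hb, rfl⟩
    obtain ⟨x, hx0, hxlab, hxval⟩ := flow_decomp m src tgt label s t r hr hsrc htgt J h1
      (Finset.univ.filter (fun e => 0 < f e)).card f (le_refl _) hf0 hcons
    refine ⟨∑ a ∈ J, x a, ⟨x, hx0, fun i => ?_, rfl⟩, le_of_eq hxval⟩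
    rw [hxlab i]
    exact hb i
  · rintro z ⟨x, hx0, hb, rfl⟩
    obtain ⟨f, hf0, hcons, hflab, hfval⟩ :=
      pattern_to_flow m src tgt label s t r hr hsrc J h2 x hx0
    refine ⟨∑ e ∈ Finset.univ.filter (fun e => src e = s), f e,
      ⟨f, hf0, hcons, fun i => ?_, rfl⟩, hfval⟩
    rw [hflab i]
    exact hb i
end
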